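/- Suppose all agents have the same velocity v > 0, agent closest to the source s is at distance δ from s, and any involved agent i starting at p_i picks up the package at point q_i^+. If the overall delivery time equals the optimum (δ + d(s,t))/v, then for every involved agent i: d(s, q_i^+) + d(q_i^+, t) = d(s,t) (the pick-up lies on a shortest s–t path) and d(p_i, q_i^+) ≤ δ + d(s, q_i^+). -/

import Mathlib

/-- Delivery time of a schedule with drop-offs `q` (`q 0 = s`): agent `i+1` walks to
`q i`, possibly waits, and carries the package to `q (i+1)`. -/
noncomputable def schedTime {X : Type*} [MetricSpace X]
    (v : ℕ → ℝ) (p : ℕ → X) (q : ℕ → X) : ℕ → ℝ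
  | 0 => 0
  | n + 1 => max (schedTime v p q n) (dist (p (n + 1)) (q n) / v (n + 1))
      + dist (q n) (q (n + 1)) / v (n + 1)

lemma schedTime_succ {X : Type*} [MetricSpace X] (v : ℕ → ℝ) (p q : ℕ → X) (n : ℕ) :
    schedTime v p q (n + 1)
      = max (schedTime v p q n) (dist (p (n + 1)) (q n) / v (n + 1))
          + dist (q n) (q (n + 1)) / v (n + 1) := rfl

/-- Uniform velocities: if a schedule achieves the optimum delivery time
`(δ + d(s,t))/v`, then every involved agent picks up the package on a shortest
`s`–`t` path, and can reach its pick-up point no later than the package. -/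
theorem uniform_velocity_pickup_characterization {X : Type*} [MetricSpace X]
    (v δ : ℝ) (hv : 0 < v) (hδ0 : 0 ≤ δ)
    (ℓ : ℕ) (hℓ : 1 ≤ ℓ) (p q : ℕ → X) (s t : X)
    (hq0 : q 0 = s) (hqℓ : q ℓ = t)
    (hδ : ∀ i, 1 ≤ i → i ≤ ℓ → δ ≤ dist (p i) s)
    (hopt : schedTime (fun _ => v) p q ℓ = (δ + dist s t) / v) :
    ∀ i, i < ℓ →
      dist s (q i) + dist (q i) t = dist s t ∧
      dist (p (i + 1)) (q i) ≤ δ + dist s (q i) := by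
  set T := schedTime (fun _ => v) p q with hT
  -- Lemma C: for m ≤ n, T m + d(q m, q n)/v ≤ T n
  have lemC : ∀ n m, m ≤ n → T m + dist (q m) (q n) / v ≤ T n := by
    intro n
    induction n with
    | zero =>
      intro m hm
      interval_cases m
      simp
    | succ n ih =>
      intro m hm
      rcases Nat.eq_or_lt_of_le hm with h | h
      · subst h; simp
      · have hmn : m ≤ n := Nat.lt_succ_iff.mp h
        have h1 := ih m hmn
        have hdef : T (n+1) = max (T n) (dist (p (n+1)) (q n) / v)
            + dist (q n) (q (n+1)) / v := rfl
        have htri : dist (q m) (q (n+1)) / v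
            ≤ dist (q m) (q n) / v + dist (q n) (q (n+1)) / v := by
          rw [← add_div]
          exact (div_le_div_iff_of_pos_right hv).mpr (dist_triangle _ _ _)
        have hmax : T n ≤ max (T n) (dist (p (n+1)) (q n) / v) := le_max_left _ _
        rw [hdef]
        linarith
  -- Lemma A: for 1 ≤ n ≤ ℓ, (δ + d(s, q n))/v ≤ T n
  have lemA : ∀ n, 1 ≤ n → n ≤ ℓ → (δ + dist s (q n)) / v ≤ T n := by
    intro n
    induction n with
    | zero => omega
    | succ n ih =>
      intro _ hn
      rcases Nat.eq_zero_or_pos n with h0 | hpos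
      · subst h0
        have hdef : T 1 = max (T 0) (dist (p 1) (q 0) / v) + dist (q 0) (q 1) / v := rfl
        have hd := hδ 1 le_rfl (by omega)
        have h1 : dist (p 1) s / v ≤ max (T 0) (dist (p 1) (q 0) / v) := by
          rw [hq0]; exact le_max_right _ _
        have h2 : (δ + dist s (q 1)) / v ≤ dist (p 1) s / v + dist (q 0) (q 1) / v := by
          rw [← add_div, hq0]
          exact (div_le_div_iff_of_pos_right hv).mpr (by linarith)
        rw [hdef]
        linarith
      · have hA := ih hpos (by omega)
        have hdef : T (n+1) = max (T n) (dist (p (n+1)) (q n) / v)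
            + dist (q n) (q (n+1)) / v := rfl
        have hmax : T n ≤ max (T n) (dist (p (n+1)) (q n) / v) := le_max_left _ _
        have htri : (δ + dist s (q (n+1))) / v
            ≤ (δ + dist s (q n)) / v + dist (q n) (q (n+1)) / v := by
          rw [← add_div]
          exact (div_le_div_iff_of_pos_right hv).mpr (by
            have := dist_triangle s (q n) (q (n+1)); linarith)
        rw [hdef]
        linarith
  intro i hi
  -- Part 1
  have part1 : dist s (q i) + dist (q i) t = dist s t := by
    rcases Nat.eq_zero_or_pos i with h0 | hpos
    · subst h0; rw [hq0]; simp
    · have h1 := lemA i hpos (le_of_lt hi)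
      have h2 := lemC ℓ i (le_of_lt hi)
      rw [hqℓ] at h2
      have hle : (δ + dist s (q i)) / v + dist (q i) t / v ≤ (δ + dist s t) / v := by
        rw [← hopt]; exact le_trans (by linarith) h2
      have : δ + dist s (q i) + dist (q i) t ≤ δ + dist s t := by
        rw [← add_div] at hle
        exact (div_le_div_iff_of_pos_right hv).mp hle
      have htri := dist_triangle s (q i) t
      linarith
  refine ⟨part1, ?_⟩
  -- Part 2
  have hdef : T (i+1) = max (T i) (dist (p (i+1)) (q i) / v)
      + dist (q i) (q (i+1)) / v := rfl
  have hmax : dist (p (i+1)) (q i) / v ≤ max (T i) (dist (p (i+1)) (q i) / v) :=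
    le_max_right _ _
  have h2 := lemC ℓ (i+1) hi
  rw [hqℓ] at h2
  have hle : dist (p (i+1)) (q i) / v + dist (q i) (q (i+1)) / v
      + dist (q (i+1)) t / v ≤ (δ + dist s t) / v := by
    rw [← hopt]
    have : T (i+1) + dist (q (i+1)) t / v ≤ T ℓ := h2
    rw [hdef] at this
    linarith
  have h3 : dist (p (i+1)) (q i) + dist (q i) (q (i+1)) + dist (q (i+1)) t
      ≤ δ + dist s t := by
    rw [← add_div, ← add_div] at hle
    exact (div_le_div_iff_of_pos_right hv).mp hle
  have htri := dist_triangle (q i) (q (i+1)) t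
  linarith [part1 ▸ h3]
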